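/- The two circular permutations (a,b,c,d) and (a,c,b,d) of the vertex set {a,b,c,d} of the complete graph K₄ together separate every pair of non-adjacent edges of K₄; consequently π°(K₄) ≤ 2. -/

import Mathlib

/-- Strict cyclic betweenness on `Fin n`: `b` lies strictly between `a` and `c`
going clockwise from `a` to `c`. -/
def cycBtw {n : ℕ} (a b c : Fin n) : Prop :=
  (a < b ∧ b < c) ∨ (b < c ∧ c < a) ∨ (c < a ∧ a < b)

/-- The pair of non-adjacent edges `uv` and `xy` is separated in the circular ordering `σ`
(the ordering places vertex `w` at circular position `σ w`): the endpoints `x` and `y` lie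
in the same arc determined by `u` and `v`, i.e. the endpoints do not alternate. -/
def cSeparates {V : Type*} {n : ℕ} (σ : V ≃ Fin n) (u v x y : V) : Prop :=
  cycBtw (σ u) (σ x) (σ v) ↔ cycBtw (σ u) (σ y) (σ v)

/-- The chords `uv` and `xy` cross (their endpoints alternate) in the circular ordering `σ`. -/
def cCrosses {V : Type*} {n : ℕ} (σ : V ≃ Fin n) (u v x y : V) : Prop :=
  (cycBtw (σ u) (σ x) (σ v) ∧ cycBtw (σ v) (σ y) (σ u)) ∨
  (cycBtw (σ u) (σ y) (σ v) ∧ cycBtw (σ v) (σ x) (σ u))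

/-- A family of circular orderings is pairwise suitable for `G`: every pair of
non-adjacent edges is separated in at least one ordering of the family. -/
def IsCircSepFamily {V : Type*} {n k : ℕ} (G : SimpleGraph V) (F : Fin k → (V ≃ Fin n)) : Prop :=
  ∀ u v x y : V, G.Adj u v → G.Adj x y → u ≠ x → u ≠ y → v ≠ x → v ≠ y →
    ∃ i, cSeparates (F i) u v x y

/-- The circular separation dimension `π°(G)`: the minimum number of circular orderings of the
vertex set such that every pair of non-adjacent edges is separated in at least one of them. -/
noncomputable def circSepDim {V : Type*} [Fintype V] (G : SimpleGraph V) : ℕ :=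
  sInf {k | ∃ F : Fin k → (V ≃ Fin (Fintype.card V)), IsCircSepFamily G F}

/-- With vertices `a = 0, b = 1, c = 2, d = 3` of `K₄`, the two circular permutations
`(a,b,c,d)` (the identity ordering) and `(a,c,b,d)` together separate every pair of
non-adjacent edges of `K₄`; consequently `π°(K₄) ≤ 2`. -/
theorem k4_two_circular_orderings :
    IsCircSepFamily (SimpleGraph.completeGraph (Fin 4))
      ![Equiv.refl (Fin 4), Equiv.swap (1 : Fin 4) (2 : Fin 4)] ∧
    circSepDim (SimpleGraph.completeGraph (Fin 4)) ≤ 2 := by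
  have h : IsCircSepFamily (SimpleGraph.completeGraph (Fin 4))
      ![Equiv.refl (Fin 4), Equiv.swap (1 : Fin 4) (2 : Fin 4)] := by
    intro u v x y huv hxy h1 h2 h3 h4
    fin_cases u <;> fin_cases v <;> fin_cases x <;> fin_cases y <;>
      simp_all [cSeparates, cycBtw, Fin.exists_fin_two, Equiv.swap_apply_def]
  refine ⟨h, Nat.sInf_le ⟨![Equiv.refl (Fin 4), Equiv.swap (1 : Fin 4) (2 : Fin 4)], ?_⟩⟩
  exact h
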